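/- Let T: ℤ × ℤ → ℝ satisfy the quasi-periodicity T(n+g+1, t) = T(n, t) + an + bt + c with 2b - a < (g+1)L, and define X^{(k)}_{n,t} = min_{j=0..k}[jL + 2T(n-j-1, t+1) + T(n,t) + T(n-1,t) - (2T(n-1,t+1) + T(n-j,t) + T(n-j-1,t))]. Then X^{(g+1)}_{n,t} = X^{(g)}_{n,t}. -/

import Mathlib

/-- The tropical permanent-type expression `X^{(k)}_{n,t}`. -/
noncomputable def Xfun (L : ℝ) (T : ℤ → ℤ → ℝ) (k : ℕ) (n t : ℤ) : ℝ :=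
  (Finset.range (k + 1)).inf' Finset.nonempty_range_add_one fun j =>
    (j : ℝ) * L + 2 * T (n - j - 1) (t + 1) + T n t + T (n - 1) t -
      (2 * T (n - 1) (t + 1) + T (n - j) t + T (n - j - 1) t)

theorem X_succ_eq_X (g : ℕ) (hg : 0 < g) (L a b c : ℝ) (T : ℤ → ℤ → ℝ)
    (hquasi : ∀ n t : ℤ, T (n + g + 1) t = T n t + (a * n + b * t + c))
    (hL : 2 * b - a < (g + 1) * L) :
    ∀ n t : ℤ, Xfun L T (g + 1) n t = Xfun L T g n t := by
  intro n t
  unfold Xfun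
  set f : ℕ → ℝ := fun j =>
    (j : ℝ) * L + 2 * T (n - j - 1) (t + 1) + T n t + T (n - 1) t -
      (2 * T (n - 1) (t + 1) + T (n - j) t + T (n - j - 1) t) with hf
  have h0 : f 0 = 0 := by simp [hf]
  have hle : (Finset.range (g + 1)).inf' Finset.nonempty_range_add_one f ≤ f 0 :=
    Finset.inf'_le _ (Finset.mem_range.mpr (Nat.succ_pos g))
  have h1 : T (n - 1) (t + 1) = T (n - g - 2) (t + 1) + (a * (n - g - 2) + b * (t + 1) + c) := by
    have := hquasi (n - g - 2) (t + 1)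
    rw [show n - (g:ℤ) - 2 + g + 1 = n - 1 by ring] at this
    push_cast at this ⊢; linarith
  have h2 : T n t = T (n - g - 1) t + (a * (n - g - 1) + b * t + c) := by
    have := hquasi (n - g - 1) t
    rw [show n - (g:ℤ) - 1 + g + 1 = n by ring] at this
    push_cast at this ⊢; linarith
  have h3 : T (n - 1) t = T (n - g - 2) t + (a * (n - g - 2) + b * t + c) := by
    have := hquasi (n - g - 2) t
    rw [show n - (g:ℤ) - 2 + g + 1 = n - 1 by ring] at this
    push_cast at this ⊢; linarith
  have hval : f (g + 1) = ((g : ℝ) + 1) * L + a - 2 * b := by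
    simp only [hf]
    rw [show n - ((g:ℕ) + 1 : ℕ) - 1 = n - g - 2 by push_cast; ring,
        show n - ((g:ℕ) + 1 : ℕ) = n - g - 1 by push_cast; ring]
    push_cast
    rw [h1, h2, h3]; ring
  apply le_antisymm
  · apply Finset.le_inf'
    intro j hj
    exact Finset.inf'_le _ (Finset.mem_range.mpr (Nat.lt_succ_of_lt (Finset.mem_range.mp hj)))
  · apply Finset.le_inf'
    intro j hj
    rcases Nat.lt_succ_iff_lt_or_eq.mp (Finset.mem_range.mp hj) with h | h
    · exact Finset.inf'_le _ (Finset.mem_range.mpr h)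
    · subst h
      calc (Finset.range (g + 1)).inf' Finset.nonempty_range_add_one f ≤ f 0 := hle
        _ ≤ f (g + 1) := by rw [h0, hval]; linarith
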